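/- Let V be a finite-dimensional real vector space with dim_ℝ V = 2n + r and let L ⊆ 𝕋_ℂV be a lagrangian subspace with real index r, order s, and maximal type n. Then there exists a real form B ∈ Λ²V* such that L = e^B(E ⊕ Ann(E)), where E := pr_{V_ℂ}(L) and Ann(E) := {ξ ∈ (V_ℂ)* : ξ|_E = 0}. -/

import Mathlib

open TensorProduct Module

set_option maxHeartbeats 1000000
set_option synthInstance.maxHeartbeats 400000

noncomputable section

namespace CDirac


/-- The real generalized tangent space `V ⊕ V*`. -/
abbrev TR (V : Type*) [AddCommGroup V] [Module ℝ V] := V × (V →ₗ[ℝ] ℝ)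

variable {V : Type*} [AddCommGroup V] [Module ℝ V]

/-- The canonical pairing `⟨X+ξ, Y+η⟩ = (η X + ξ Y)/2` on `𝕋V`. -/
def pairR (a b : TR V) : ℝ := (b.2 a.1 + a.2 b.1) / 2

lemma pairR_add_left (a a' b : TR V) : pairR (a + a') b = pairR a b + pairR a' b := by
  simp only [pairR, Prod.fst_add, Prod.snd_add, map_add, LinearMap.add_apply]
  ring

lemma pairR_smul_left (c : ℝ) (a b : TR V) : pairR (c • a) b = c * pairR a b := by
  simp only [pairR, Prod.smul_fst, Prod.smul_snd, map_smul, LinearMap.smul_apply,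
    smul_eq_mul]
  ring

/-- Orthogonal complement with respect to the pairing on `𝕋V`. -/
def orthR (L : Submodule ℝ (TR V)) : Submodule ℝ (TR V) where
  carrier := {a | ∀ b ∈ L, pairR a b = 0}
  zero_mem' := fun b _ => by simp [pairR]
  add_mem' := fun {a a'} ha ha' b hb => by
    rw [pairR_add_left, ha b hb, ha' b hb, add_zero]
  smul_mem' := fun c a ha b hb => by rw [pairR_smul_left, ha b hb, mul_zero]

/-- A real lagrangian subspace: `L = L^⊥`. -/
def IsLagrangianR (L : Submodule ℝ (TR V)) : Prop := L = orthR L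

/-- An isotropic subspace of `𝕋V`. -/
def IsIsotropicR (K : Submodule ℝ (TR V)) : Prop := ∀ a ∈ K, ∀ b ∈ K, pairR a b = 0

/-- The quotient `K^⊥/K`. -/
abbrev quotK (K : Submodule ℝ (TR V)) :=
  @HasQuotient.Quotient _ _ (Submodule.hasQuotient (R := ℝ) (M := ↥(orthR K)))
    (K.comap (orthR K).subtype)

/-- The quotient map `K^⊥ → K^⊥/K`. -/
def mkK (K : Submodule ℝ (TR V)) : ↥(orthR K) →ₗ[ℝ] quotK K :=
  @Submodule.mkQ ℝ (↥(orthR K)) _ (Submodule.addCommGroup _) (Submodule.module _)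
    (K.comap (orthR K).subtype)




/-- The complexification `V_ℂ = ℂ ⊗_ℝ V`. -/
abbrev Cx (V : Type*) [AddCommGroup V] [Module ℝ V] := ℂ ⊗[ℝ] V

/-- The complex dual `(V_ℂ)^*`. -/
abbrev DualC (V : Type*) [AddCommGroup V] [Module ℝ V] := Cx V →ₗ[ℂ] ℂ

/-- The complexified generalized tangent space `𝕋_ℂ V = V_ℂ ⊕ (V_ℂ)^*`. -/
abbrev TCx (V : Type*) [AddCommGroup V] [Module ℝ V] := Cx V × DualC V

/-- The ℂ-bilinear pairing on `𝕋_ℂ V`. -/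
def pairC (a b : TCx V) : ℂ := (b.2 a.1 + a.2 b.1) / 2

lemma pairC_add_left (a a' b : TCx V) : pairC (a + a') b = pairC a b + pairC a' b := by
  simp only [pairC, Prod.fst_add, Prod.snd_add, map_add, LinearMap.add_apply]
  ring

lemma pairC_smul_left (c : ℂ) (a b : TCx V) : pairC (c • a) b = c * pairC a b := by
  simp only [pairC, Prod.smul_fst, Prod.smul_snd, map_smul, LinearMap.smul_apply,
    smul_eq_mul]
  ring

/-- Orthogonal complement with respect to the ℂ-bilinear pairing on `𝕋_ℂ V`. -/
def orthC (L : Submodule ℂ (TCx V)) : Submodule ℂ (TCx V) where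
  carrier := {a | ∀ b ∈ L, pairC a b = 0}
  zero_mem' := fun b _ => by simp [pairC]
  add_mem' := fun {a a'} ha ha' b hb => by
    rw [pairC_add_left, ha b hb, ha' b hb, add_zero]
  smul_mem' := fun c a ha b hb => by rw [pairC_smul_left, ha b hb, mul_zero]

/-- A complex lagrangian subspace: `L = L^⊥`. -/
def IsLagrangianC (L : Submodule ℂ (TCx V)) : Prop := L = orthC L

private lemma conjCxAux_smul (z : ℂ) (x : Cx V) :
    TensorProduct.map Complex.conjAe.toLinearMap LinearMap.id (z • x) =
      starRingEnd ℂ z • TensorProduct.map Complex.conjAe.toLinearMap LinearMap.id x := by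
  induction x using TensorProduct.induction_on with
  | zero => simp
  | tmul w v => simp [smul_tmul', smul_eq_mul, Complex.conjAe_coe, map_mul]
  | add x y hx hy => simp only [smul_add, map_add, hx, hy]

/-- Conjugation on `V_ℂ`, as a `conj`-semilinear map. -/
def conjCx : Cx V →ₛₗ[starRingEnd ℂ] Cx V where
  toFun := TensorProduct.map Complex.conjAe.toLinearMap LinearMap.id
  map_add' := map_add _
  map_smul' := conjCxAux_smul

lemma conjCx_smul (z : ℂ) (x : Cx V) :
    conjCx (z • x) = starRingEnd ℂ z • conjCx x := conjCxAux_smul z x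

/-- Conjugation of a complex linear functional. -/
def conjDualFun (ξ : DualC V) : DualC V where
  toFun x := starRingEnd ℂ (ξ (conjCx x))
  map_add' x y := by simp
  map_smul' z x := by
    show starRingEnd ℂ (ξ (conjCx (z • x))) = _
    rw [conjCx_smul, map_smul, smul_eq_mul, map_mul, RingHom.id_apply]
    simp [smul_eq_mul]

/-- Conjugation on `(V_ℂ)^*`, as a `conj`-semilinear map. -/
def conjDual : DualC V →ₛₗ[starRingEnd ℂ] DualC V where
  toFun := conjDualFun
  map_add' ξ η := by ext x; simp [conjDualFun]
  map_smul' z ξ := by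
    ext x
    simp [conjDualFun, smul_eq_mul, map_mul]

/-- Conjugation on `𝕋_ℂ V`, as a `conj`-semilinear map. -/
def conjT : TCx V →ₛₗ[starRingEnd ℂ] TCx V where
  toFun a := (conjCx a.1, conjDual a.2)
  map_add' a b := by simp [Prod.ext_iff]
  map_smul' z a := by
    simp [Prod.ext_iff, Prod.smul_fst, Prod.smul_snd, map_smulₛₗ]

instance : RingHomSurjective (starRingEnd ℂ) :=
  ⟨fun z => ⟨starRingEnd ℂ z, by simp⟩⟩

/-- The conjugate `L̄` of a ℂ-subspace of `𝕋_ℂ V`. -/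
def conjSub (L : Submodule ℂ (TCx V)) : Submodule ℂ (TCx V) := L.map conjT

/-- The conjugate `Ē` of a ℂ-subspace of `V_ℂ`. -/
def conjE (E : Submodule ℂ (Cx V)) : Submodule ℂ (Cx V) := E.map conjCx

/-- The canonical inclusion `V → V_ℂ`, `v ↦ 1 ⊗ v`. -/
def iV : V →ₗ[ℝ] Cx V := TensorProduct.mk ℝ ℂ V 1





/-- ℝ-linear auxiliary version of the ℂ-linear extension of a real functional. -/
def dualExtAux (α : V →ₗ[ℝ] ℝ) : Cx V →ₗ[ℝ] ℂ :=
  TensorProduct.lift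
    (LinearMap.mk₂ ℝ (fun z v => z * (α v : ℂ))
      (fun z w v => by push_cast; ring)
      (fun r z v => by simp only [Complex.real_smul]; ring)
      (fun z v w => by push_cast [map_add]; ring)
      (fun r z v => by simp only [map_smul, smul_eq_mul, Complex.real_smul]; push_cast; ring))

private lemma dualExtAux_smulC (α : V →ₗ[ℝ] ℝ) (z : ℂ) (x : Cx V) :
    dualExtAux α (z • x) = z * dualExtAux α x := by
  induction x using TensorProduct.induction_on with
  | zero => simp
  | tmul w v =>
      simp only [dualExtAux, smul_tmul', lift.tmul, LinearMap.mk₂_apply, smul_eq_mul]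
      ring
  | add x y hx hy => simp only [smul_add, map_add, hx, hy]; ring

/-- The ℂ-linear extension of a real functional `α : V → ℝ` to `V_ℂ`. -/
def dualExtFun (α : V →ₗ[ℝ] ℝ) : DualC V where
  toFun := dualExtAux α
  map_add' := map_add _
  map_smul' z x := by simpa using dualExtAux_smulC α z x

private lemma dualExtFun_tmul (α : V →ₗ[ℝ] ℝ) (z : ℂ) (v : V) :
    dualExtFun α (z ⊗ₜ[ℝ] v) = z * (α v : ℂ) := by
  simp [dualExtFun, dualExtAux]

/-- The ℂ-linear extension map `V^* → (V_ℂ)^*`, as an ℝ-linear map. -/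
def dualExt : (V →ₗ[ℝ] ℝ) →ₗ[ℝ] DualC V where
  toFun := dualExtFun
  map_add' α β := by
    apply LinearMap.ext; intro x
    induction x using TensorProduct.induction_on with
    | zero => simp
    | tmul w v =>
        simp only [dualExtFun_tmul, LinearMap.add_apply]
        push_cast
        ring
    | add x y hx hy =>
        simp only [map_add, LinearMap.add_apply] at *
        rw [hx, hy]
  map_smul' r α := by
    apply LinearMap.ext; intro x
    induction x using TensorProduct.induction_on with
    | zero => simp
    | tmul w v =>
        simp only [dualExtFun_tmul, RingHom.id_apply, LinearMap.smul_apply,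
          LinearMap.smul_apply, smul_eq_mul, Complex.real_smul]
        push_cast
        ring
    | add x y hx hy =>
        simp only [map_add, RingHom.id_apply, LinearMap.smul_apply, smul_eq_mul] at *
        rw [hx, hy]

/-- The canonical inclusion `𝕋V → 𝕋_ℂV`. -/
def iT : TR V →ₗ[ℝ] TCx V where
  toFun a := (iV a.1, dualExt a.2)
  map_add' a b := by simp [Prod.ext_iff]
  map_smul' r a := by simp [Prod.ext_iff]



/-- Auxiliary ℝ-linear version of the ℂ-bilinear extension of a real bilinear form. -/
def bilinExtAux (B : V →ₗ[ℝ] V →ₗ[ℝ] ℝ) : Cx V →ₗ[ℝ] DualC V :=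
  TensorProduct.lift
    (LinearMap.mk₂ ℝ (fun z v => z • dualExt (B v))
      (fun z w v => by simp only [add_smul])
      (fun r z v => by simp only [smul_assoc])
      (fun z v w => by simp only [map_add, smul_add])
      (fun r z v => by simp only [map_smul]; exact smul_comm z r _))

private lemma bilinExtAux_smulC (B : V →ₗ[ℝ] V →ₗ[ℝ] ℝ) (z : ℂ) (x : Cx V) :
    bilinExtAux B (z • x) = z • bilinExtAux B x := by
  induction x using TensorProduct.induction_on with
  | zero => simp
  | tmul w v =>
      simp only [bilinExtAux, smul_tmul', lift.tmul, LinearMap.mk₂_apply, smul_eq_mul,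
        mul_smul]
  | add x y hx hy => simp only [smul_add, map_add, hx, hy]

/-- The ℂ-bilinear extension of a real bilinear form `B : V × V → ℝ` to `V_ℂ`. -/
def bilinExt (B : V →ₗ[ℝ] V →ₗ[ℝ] ℝ) : Cx V →ₗ[ℂ] DualC V where
  toFun := bilinExtAux B
  map_add' := map_add _
  map_smul' z x := by simpa using bilinExtAux_smulC B z x

/-- The `B`-transformation `e^B(X+ξ) = X + ξ + B̃(X,·)` of `𝕋_ℂV`, for a real `B`. -/
def eB (B : V →ₗ[ℝ] V →ₗ[ℝ] ℝ) : TCx V →ₗ[ℂ] TCx V where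
  toFun a := (a.1, a.2 + bilinExt B a.1)
  map_add' a b := by
    simp only [Prod.fst_add, Prod.snd_add, map_add, Prod.mk_add_mk, Prod.mk.injEq]
    exact ⟨trivial, by abel⟩
  map_smul' z a := by
    simp only [Prod.smul_fst, Prod.smul_snd, map_smul, RingHom.id_apply, Prod.smul_mk,
      Prod.mk.injEq, smul_add]

/-- The real `B`-transformation `e^B(X+α) = X + α + B(X,·)` of `𝕋V`. -/
def eBR (B : V →ₗ[ℝ] V →ₗ[ℝ] ℝ) : TR V →ₗ[ℝ] TR V where
  toFun a := (a.1, a.2 + B a.1)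
  map_add' a b := by
    simp only [Prod.fst_add, Prod.snd_add, map_add, Prod.mk_add_mk, Prod.mk.injEq]
    exact ⟨trivial, by abel⟩
  map_smul' r a := by
    simp only [Prod.smul_fst, Prod.smul_snd, map_smul, RingHom.id_apply, Prod.smul_mk,
      Prod.mk.injEq, smul_add]


/-- The range `E = pr_{V_ℂ}(L)` of a subspace of `𝕋_ℂV`. -/
def Esub (L : Submodule ℂ (TCx V)) : Submodule ℂ (Cx V) :=
  L.map (LinearMap.fst ℂ (Cx V) (DualC V))

/-- The real index `r = dim_ℂ (L ∩ L̄)`. -/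
def riL (L : Submodule ℂ (TCx V)) : ℕ := finrank ℂ ↥(L ⊓ conjSub L)

/-- The real part `K = (L ∩ L̄) ∩ 𝕋V`, as a subspace of `𝕋V`. -/
def Ksub (L : Submodule ℂ (TCx V)) : Submodule ℝ (TR V) :=
  ((L ⊓ conjSub L).restrictScalars ℝ).comap iT

/-- The distribution `D = (E + Ē) ∩ V`, as a subspace of `V`. -/
def Dsub (L : Submodule ℂ (TCx V)) : Submodule ℝ V :=
  ((Esub L ⊔ conjE (Esub L)).restrictScalars ℝ).comap iV

/-- The distribution `Δ = (E ∩ Ē) ∩ V`, as a subspace of `V`. -/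
def DeltaSub (L : Submodule ℂ (TCx V)) : Submodule ℝ V :=
  ((Esub L ⊓ conjE (Esub L)).restrictScalars ℝ).comap iV

/-- The order `s = dim V - dim D`. -/
def orderL (L : Submodule ℂ (TCx V)) : ℕ := finrank ℝ V - finrank ℝ ↥(Dsub L)

/-- The (normalized) type `k = dim_ℂ(E + Ē) - dim_ℂ E`. -/
def typeL (L : Submodule ℂ (TCx V)) : ℕ :=
  finrank ℂ ↥(Esub L ⊔ conjE (Esub L)) - finrank ℂ ↥(Esub L)


end CDirac


namespace CDirac

section Aux
variable {V : Type*} [AddCommGroup V] [Module ℝ V]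

lemma conjCx_tmul (z : ℂ) (v : V) :
    conjCx (z ⊗ₜ[ℝ] v) = (starRingEnd ℂ z) ⊗ₜ[ℝ] v := by
  simp [conjCx, Complex.conjAe_coe]

lemma conjCx_conjCx (x : Cx V) : conjCx (conjCx (V := V) x) = x := by
  induction x using TensorProduct.induction_on with
  | zero => simp
  | tmul z v => simp [conjCx_tmul]
  | add a b ha hb => rw [map_add, map_add, ha, hb]

lemma conjCx_iV (v : V) : conjCx (iV v) = iV (V := V) v := by
  simp [iV, TensorProduct.mk_apply, conjCx_tmul]

lemma conjDual_apply (η : DualC V) (x : Cx V) :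
    conjDual η x = starRingEnd ℂ (η (conjCx x)) := rfl

lemma conjDual_conjDual (η : DualC V) : conjDual (conjDual (V := V) η) = η := by
  ext x
  simp [conjDual_apply, conjCx_conjCx]

lemma conjT_apply (a : TCx V) : conjT a = (conjCx a.1, conjDual a.2) := rfl

lemma conjT_conjT (a : TCx V) : conjT (conjT (V := V) a) = a := by
  cases a
  simp [conjT_apply, conjCx_conjCx, conjDual_conjDual]

lemma mem_conjSub {L : Submodule ℂ (TCx V)} {a : TCx V} :
    a ∈ conjSub L ↔ conjT a ∈ L := by
  constructor
  · rintro ⟨b, hb, rfl⟩; rwa [conjT_conjT]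
  · intro h; exact ⟨conjT a, h, conjT_conjT a⟩

lemma mem_conjE {E : Submodule ℂ (Cx V)} {x : Cx V} :
    x ∈ conjE E ↔ conjCx x ∈ E := by
  constructor
  · rintro ⟨y, hy, rfl⟩; rwa [conjCx_conjCx]
  · intro h; exact ⟨conjCx x, h, conjCx_conjCx x⟩

lemma mem_orthC {L : Submodule ℂ (TCx V)} {a : TCx V} :
    a ∈ orthC L ↔ ∀ b ∈ L, pairC a b = 0 := Iff.rfl

lemma pairC_add_right (a b b' : TCx V) : pairC a (b + b') = pairC a b + pairC a b' := by
  simp only [pairC, Prod.fst_add, Prod.snd_add, map_add, LinearMap.add_apply]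
  ring

lemma pairC_smul_right (c : ℂ) (a b : TCx V) : pairC a (c • b) = c * pairC a b := by
  simp only [pairC, Prod.smul_fst, Prod.smul_snd, map_smul, LinearMap.smul_apply,
    smul_eq_mul]
  ring

/-- The pairing as a linear map into the dual. -/
def PhiC : TCx V →ₗ[ℂ] Module.Dual ℂ (TCx V) :=
  LinearMap.mk₂ ℂ pairC pairC_add_left pairC_smul_left pairC_add_right pairC_smul_right

lemma PhiC_apply (a b : TCx V) : PhiC a b = pairC a b := rfl

lemma ann_finrank {K W₀ : Type*} [Field K] [AddCommGroup W₀] [Module K W₀]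
    [FiniteDimensional K W₀] (W : Subspace K W₀) :
    finrank K W + finrank K W.dualAnnihilator = finrank K W₀ := by
  have h1 : finrank K (W₀ ⧸ W) + finrank K W = finrank K W₀ :=
    Submodule.finrank_quotient_add_finrank W
  have h2 : finrank K (W₀ ⧸ W) = finrank K W.dualAnnihilator :=
    LinearEquiv.finrank_eq W.quotEquivAnnihilator
  omega

lemma finrank_prod_submodule {K M M₂ : Type*} [Field K] [AddCommGroup M] [AddCommGroup M₂]
    [Module K M] [Module K M₂] [FiniteDimensional K M] [FiniteDimensional K M₂]
    (p : Submodule K M) (q : Submodule K M₂) :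
    finrank K (p.prod q) = finrank K p + finrank K q := by
  have e : ↥(p.prod q) ≃ₗ[K] ↥p × ↥q :=
    { toFun := fun x => (⟨x.1.1, x.2.1⟩, ⟨x.1.2, x.2.2⟩)
      map_add' := fun x y => rfl
      map_smul' := fun c x => rfl
      invFun := fun y => ⟨(y.1.1, y.2.1), ⟨y.1.2, y.2.2⟩⟩
      left_inv := fun x => rfl
      right_inv := fun y => rfl }
  rw [e.finrank_eq, Module.finrank_prod]

variable [FiniteDimensional ℝ V]

lemma finrank_Cx : finrank ℂ (Cx V) = finrank ℝ V := Module.finrank_baseChange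

lemma finrank_TCx : finrank ℂ (TCx V) = 2 * finrank ℝ V := by
  rw [Module.finrank_prod, finrank_Cx, Module.finrank_linearMap, finrank_Cx,
    Module.finrank_self]
  ring

lemma phiC_inj : Function.Injective (PhiC (V := V)) := by
  rw [← LinearMap.ker_eq_bot]
  refine (Submodule.eq_bot_iff _).mpr fun a ha => ?_
  rw [LinearMap.mem_ker] at ha
  have h2 : a.2 = 0 := by
    apply LinearMap.ext
    intro y
    have := congrFun (congrArg DFunLike.coe ha) ((y, 0) : TCx V)
    simp only [PhiC_apply, pairC, LinearMap.zero_apply, map_zero, add_zero,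
      LinearMap.zero_apply] at this ⊢
    field_simp at this
    simpa using this
  have h1 : a.1 = 0 := by
    rw [← Module.forall_dual_apply_eq_zero_iff ℂ]
    intro φ
    have := congrFun (congrArg DFunLike.coe ha) ((0, φ) : TCx V)
    simp only [PhiC_apply, pairC, LinearMap.zero_apply, map_zero, add_zero] at this
    field_simp at this
    simpa using this
  exact Prod.ext h1 h2

lemma finrank_lagrangian {L : Submodule ℂ (TCx V)} (hL : IsLagrangianC L) :
    finrank ℂ L = finrank ℝ V := by
  have hbij : Function.Bijective (PhiC (V := V)) :=
    ⟨phiC_inj, (LinearMap.injective_iff_surjective_of_finrank_eq_finrank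
      Subspace.dual_finrank_eq.symm).mp phiC_inj⟩
  let e := LinearEquiv.ofBijective _ hbij
  have horth : orthC L = L.dualAnnihilator.comap (PhiC (V := V)) := by
    ext a
    rw [mem_orthC, Submodule.mem_comap, Submodule.mem_dualAnnihilator]
    rfl
  have h1 : finrank ℂ (orthC L) = finrank ℂ L.dualAnnihilator := by
    rw [horth]
    have : L.dualAnnihilator.comap (PhiC (V := V)) = L.dualAnnihilator.comap (e : TCx V →ₗ[ℂ] Module.Dual ℂ (TCx V)) := rfl
    rw [this, Submodule.comap_equiv_eq_map_symm]
    exact LinearEquiv.finrank_map_eq _ _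
  have h2 := ann_finrank L
  have h3 : finrank ℂ L = finrank ℂ (orthC L) := by rw [← hL]
  have h4 := finrank_TCx (V := V)
  omega

lemma finrank_conjE (E : Submodule ℂ (Cx V)) :
    finrank ℂ ↥(conjE E) = finrank ℂ ↥E := by
  let cR : Cx V →ₗ[ℝ] Cx V :=
    TensorProduct.map Complex.conjAe.toLinearMap LinearMap.id
  have hcc : ∀ x : Cx V, cR (cR x) = x := fun x => conjCx_conjCx x
  let ceq : Cx V ≃ₗ[ℝ] Cx V :=
    LinearEquiv.ofLinear cR cR (LinearMap.ext hcc) (LinearMap.ext hcc)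
  have h1 : (conjE E).restrictScalars ℝ = (E.restrictScalars ℝ).map (ceq : Cx V →ₗ[ℝ] Cx V) := by
    ext x
    constructor
    · rintro ⟨y, hy, rfl⟩
      exact ⟨y, hy, rfl⟩
    · rintro ⟨y, hy, rfl⟩
      exact ⟨y, hy, rfl⟩
  have h3 : ∀ (W : Submodule ℂ (Cx V)), finrank ℝ (W.restrictScalars ℝ) = 2 * finrank ℂ W := by
    intro W
    have h4 := finrank_mul_finrank ℝ ℂ ↥W
    rw [Complex.finrank_real_complex] at h4
    have h5 : finrank ℝ (W.restrictScalars ℝ) = finrank ℝ ↥W :=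
      LinearEquiv.finrank_eq ((Submodule.restrictScalarsEquiv ℝ ℂ (Cx V) W).restrictScalars ℝ)
    omega
  have h2 : finrank ℝ ((conjE E).restrictScalars ℝ) = finrank ℝ (E.restrictScalars ℝ) := by
    rw [h1]
    exact LinearEquiv.finrank_map_eq ceq _
  rw [h3, h3] at h2
  omega


lemma pair_zero_of_mem {L : Submodule ℂ (TCx V)} (hL : IsLagrangianC L) {a b : TCx V}
    (ha : a ∈ L) (hb : b ∈ L) : pairC a b = 0 := by
  rw [hL] at ha
  exact ha b hb

lemma mem_of_pair {L : Submodule ℂ (TCx V)} (hL : IsLagrangianC L) {a : TCx V}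
    (h : ∀ b ∈ L, pairC a b = 0) : a ∈ L := by
  rw [hL]; exact h

lemma snd_mem_iff {L : Submodule ℂ (TCx V)} (hL : IsLagrangianC L) {η : DualC V} :
    ((0, η) : TCx V) ∈ L ↔ η ∈ (Esub L).dualAnnihilator := by
  constructor
  · intro h0
    rw [Submodule.mem_dualAnnihilator]
    intro x hx
    obtain ⟨b, hb, rfl⟩ := Submodule.mem_map.mp hx
    have h := pair_zero_of_mem hL h0 hb
    simp only [pairC, map_zero, add_zero, zero_add, div_eq_zero_iff, OfNat.ofNat_ne_zero,
      or_false] at h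
    exact h
  · intro hη
    apply mem_of_pair hL
    intro b hb
    have h1 : η b.1 = 0 :=
      (Submodule.mem_dualAnnihilator _).mp hη b.1 (Submodule.mem_map.mpr ⟨b, hb, rfl⟩)
    simp [pairC, h1]

lemma iV_smul (r : ℝ) (v : V) : iV (r • v) = (r : ℂ) • iV (V := V) v := by
  simp only [iV, TensorProduct.mk_apply, TensorProduct.tmul_smul, TensorProduct.smul_tmul']
  norm_num


end Aux
end CDirac

open CDirac Module

/-- A lagrangian `L ⊆ 𝕋_ℂV` (with `dim V = 2n + r`) of real index
`r`, order `s` and maximal type `n` is of the form `L = e^B(E ⊕ Ann E)` for some real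
two-form `B`. -/
theorem stmt17 (V : Type*) [AddCommGroup V] [Module ℝ V] [FiniteDimensional ℝ V]
    (n r s : ℕ) (hdim : finrank ℝ V = 2 * n + r)
    (L : Submodule ℂ (TCx V)) (hL : IsLagrangianC L)
    (hr : riL L = r) (hs : orderL L = s) (htype : typeL L = n) :
    ∃ B : V →ₗ[ℝ] V →ₗ[ℝ] ℝ, (∀ v : V, B v v = 0) ∧
      L = Submodule.map (eB B) ((Esub L).prod (Esub L).dualAnnihilator) := by
  classical
  set E : Submodule ℂ (Cx V) := Esub L with hEdef
  set Eb : Submodule ℂ (Cx V) := conjE E with hEbdef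
  set P : Submodule ℂ (Cx V) := E ⊓ Eb with hPdef
  have hPle : P ≤ E := inf_le_left
  have hPleb : P ≤ Eb := inf_le_right
  have hEbE : ∀ x, x ∈ Eb → conjCx x ∈ E := fun x hx => mem_conjE.mp hx
  have hEEb : ∀ x, x ∈ E → conjCx x ∈ Eb := fun x hx =>
    mem_conjE.mpr (by rwa [conjCx_conjCx])
  have hPconj : ∀ x, x ∈ P → conjCx x ∈ P := fun x hx => ⟨hEbE x hx.2, hEEb x hx.1⟩
  have hfst : ∀ a, a ∈ L → a.1 ∈ E := fun a ha => ⟨a, ha, rfl⟩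
  -- a linear section of the projection L → E
  obtain ⟨σ, hσ⟩ : ∃ σ : ↥E →ₗ[ℂ] ↥L, ∀ x : ↥E, (↑(σ x) : TCx V).1 = ↑x := by
    set f₀ : ↥L →ₗ[ℂ] ↥E :=
      LinearMap.codRestrict E ((LinearMap.fst ℂ (Cx V) (DualC V)).comp L.subtype)
        (fun a => hfst ↑a a.2) with hf₀def
    have hf₀ : LinearMap.range f₀ = ⊤ := by
      rw [LinearMap.range_eq_top]
      rintro ⟨x, hx⟩
      obtain ⟨a, ha, h1⟩ := hx
      exact ⟨⟨a, ha⟩, Subtype.ext h1⟩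
    obtain ⟨σ, hσc⟩ := f₀.exists_rightInverse_of_surjective hf₀
    refine ⟨σ, fun x => ?_⟩
    have h2 := congrFun (congrArg DFunLike.coe hσc) x
    exact congrArg Subtype.val h2
  set ε : ↥E →ₗ[ℂ] DualC V :=
    (LinearMap.snd ℂ (Cx V) (DualC V)).comp (L.subtype.comp σ) with hεdef
  have hεapp : ∀ x : ↥E, (↑(σ x) : TCx V) = ((x : Cx V), ε x) := fun x =>
    Prod.ext (hσ x) rfl
  have hskew : ∀ x y : ↥E, ε x ↑y + ε y ↑x = 0 := by
    intro x y
    have h := pair_zero_of_mem hL (σ x).2 (σ y).2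
    rw [hεapp x, hεapp y, pairC] at h
    field_simp at h
    linear_combination h
  have hεself : ∀ x : ↥E, ε x ↑x = 0 := fun x => by
    have h := hskew x x; rwa [add_self_eq_zero] at h
  have hLval : ∀ (a : TCx V) (ha : a ∈ L), ∀ y ∈ E, a.2 y = ε ⟨a.1, hfst a ha⟩ y := by
    intro a ha y hy
    have h0 : a - ↑(σ ⟨a.1, hfst a ha⟩) ∈ L := sub_mem ha (σ _).2
    have h1 : a - ↑(σ ⟨a.1, hfst a ha⟩) = ((0 : Cx V), a.2 - ε ⟨a.1, hfst a ha⟩) := by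
      rw [hεapp]
      exact Prod.ext (by simp) rfl
    rw [h1] at h0
    have h2 : a.2 - ε ⟨a.1, hfst a ha⟩ ∈ E.dualAnnihilator := (snd_mem_iff hL).mp h0
    have h3 := (Submodule.mem_dualAnnihilator _).mp h2 y hy
    simp only [LinearMap.sub_apply] at h3
    exact sub_eq_zero.mp h3
  -- the intersection M = L ⊓ L̄ projects onto P = E ⊓ Ē
  set M : Submodule ℂ (TCx V) := L ⊓ conjSub L with hMdef
  set f : ↥M →ₗ[ℂ] Cx V := (LinearMap.fst ℂ (Cx V) (DualC V)).comp M.subtype with hfdef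
  have hrange : LinearMap.range f ≤ P := by
    rintro x ⟨⟨a, ha⟩, rfl⟩
    exact ⟨⟨a, ha.1, rfl⟩, mem_conjE.mpr (hfst (conjT a) (mem_conjSub.mp ha.2))⟩
  have hker : ∀ b : ↥M, f b = 0 → ((b : TCx V).2 ∈ (E ⊔ Eb).dualAnnihilator) := by
    rintro ⟨a, ha⟩ hb
    have hb1 : a.1 = 0 := hb
    rw [Submodule.dualAnnihilator_sup_eq]
    have haa : ((0 : Cx V), a.2) = a := by rw [← hb1]
    have hp1 : a.2 ∈ E.dualAnnihilator := by
      have h0 : ((0 : Cx V), a.2) ∈ L := by rw [haa]; exact ha.1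
      exact (snd_mem_iff hL).mp h0
    have hp2 : a.2 ∈ Eb.dualAnnihilator := by
      rw [Submodule.mem_dualAnnihilator]
      intro x hx
      have h2 : conjT a ∈ L := mem_conjSub.mp ha.2
      have h3 : ((0 : Cx V), conjDual a.2) ∈ L := by
        have h4 : conjT a = ((0 : Cx V), conjDual a.2) := by
          rw [conjT_apply, hb1, map_zero]
        rwa [h4] at h2
      have h4 := (snd_mem_iff hL).mp h3
      have h5 := (Submodule.mem_dualAnnihilator _).mp h4 (conjCx x) (hEbE x hx)
      rw [conjDual_apply, conjCx_conjCx, starRingEnd_apply, star_eq_zero] at h5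
      exact h5
    exact Submodule.mem_inf.mpr ⟨hp1, hp2⟩
  -- the kernel of f is isomorphic to the annihilator of E ⊔ Ē
  set g : ↥(LinearMap.ker f) →ₗ[ℂ] DualC V :=
    (LinearMap.snd ℂ (Cx V) (DualC V)).comp (M.subtype.comp (LinearMap.ker f).subtype)
    with hgdef
  have hg_inj : Function.Injective g := by
    rintro ⟨⟨a, haM⟩, haK⟩ ⟨⟨b, hbM⟩, hbK⟩ h
    have h1 : a.1 = 0 := haK
    have h2 : b.1 = 0 := hbK
    have h3 : a.2 = b.2 := h
    exact Subtype.ext (Subtype.ext (Prod.ext (by rw [h1, h2]) h3))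
  have hg_range : LinearMap.range g = (E ⊔ Eb).dualAnnihilator := by
    apply le_antisymm
    · rintro _ ⟨b, rfl⟩
      exact hker b.1 b.2
    · intro η hη
      have hη' := hη
      rw [Submodule.dualAnnihilator_sup_eq] at hη'
      have ha1 : ((0 : Cx V), η) ∈ L := (snd_mem_iff hL).mpr hη'.1
      have ha2 : ((0 : Cx V), η) ∈ conjSub L := by
        rw [mem_conjSub]
        have h6 : conjT ((0 : Cx V), η) = ((0 : Cx V), conjDual η) := by
          rw [conjT_apply, map_zero]
        rw [h6]
        apply (snd_mem_iff hL).mpr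
        rw [Submodule.mem_dualAnnihilator]
        intro x hx
        rw [conjDual_apply]
        have h7 : η (conjCx x) = 0 :=
          (Submodule.mem_dualAnnihilator _).mp hη'.2 (conjCx x) (hEEb x hx)
        rw [h7, map_zero]
      exact ⟨⟨⟨((0 : Cx V), η), ha1, ha2⟩, rfl⟩, rfl⟩
  -- dimension count
  have e1 : finrank ℂ (LinearMap.ker f) = finrank ℂ ((E ⊔ Eb).dualAnnihilator) := by
    rw [← hg_range]
    exact (LinearEquiv.ofInjective g hg_inj).finrank_eq
  have e2 : finrank ℂ (LinearMap.range f) + finrank ℂ (LinearMap.ker f) = finrank ℂ M :=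
    LinearMap.finrank_range_add_finrank_ker f
  have e3 : finrank ℂ ↥(E ⊔ Eb) + finrank ℂ ((E ⊔ Eb).dualAnnihilator) = finrank ℂ (Cx V) :=
    ann_finrank (E ⊔ Eb)
  have e4 : finrank ℂ (Cx V) = 2 * n + r := by rw [finrank_Cx, hdim]
  have e5 : finrank ℂ M = r := hr
  have e6 : finrank ℂ ↥(E ⊔ Eb) - finrank ℂ ↥E = n := htype
  have e7 : finrank ℂ ↥E ≤ finrank ℂ ↥(E ⊔ Eb) := Submodule.finrank_mono le_sup_left
  have e8 : finrank ℂ ↥(E ⊔ Eb) + finrank ℂ ↥P = finrank ℂ ↥E + finrank ℂ ↥Eb :=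
    Submodule.finrank_sup_add_finrank_inf_eq E Eb
  have e9 : finrank ℂ ↥Eb = finrank ℂ ↥E := finrank_conjE E
  have e10 : finrank ℂ ↥(LinearMap.range f) ≤ finrank ℂ ↥P := Submodule.finrank_mono hrange
  have e11 : finrank ℂ ↥(LinearMap.range f) = finrank ℂ ↥P := by omega
  have hPeq : LinearMap.range f = P := Submodule.eq_of_le_of_finrank_eq hrange e11
  have hsurj : ∀ x, x ∈ P → ∃ ξ : DualC V, ((x, ξ) : TCx V) ∈ M := by
    intro x hx
    rw [← hPeq] at hx
    obtain ⟨⟨a, ha⟩, h1⟩ := hx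
    refine ⟨a.2, ?_⟩
    have h2 : a.1 = x := h1
    rw [← h2]
    exact ha
  -- the key reality condition on P
  have hstar : ∀ (x y : Cx V) (hx : x ∈ P) (hy : y ∈ P),
      ε ⟨conjCx x, hEbE x hx.2⟩ (conjCx y) = starRingEnd ℂ (ε ⟨x, hx.1⟩ y) := by
    intro x y hx hy
    obtain ⟨ξ, hxi⟩ := hsurj x hx
    have h1 : ξ y = ε ⟨x, hx.1⟩ y := hLval (x, ξ) hxi.1 y hy.1
    have h2 : ((conjCx x, conjDual ξ) : TCx V) ∈ L := mem_conjSub.mp hxi.2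
    have h3 : conjDual ξ (conjCx y) = ε ⟨conjCx x, hEbE x hx.2⟩ (conjCx y) :=
      hLval (conjCx x, conjDual ξ) h2 (conjCx y) (hEbE y hy.2)
    rw [← h3, conjDual_apply, conjCx_conjCx, h1]
  -- a complement C of P inside E
  obtain ⟨C0, hC0⟩ := Submodule.exists_isCompl (P.comap E.subtype)
  set C : Submodule ℂ (Cx V) := C0.map E.subtype with hCdef
  have hCle : C ≤ E := by rintro x ⟨y, _, rfl⟩; exact y.2
  have hCP : ∀ x, x ∈ C → x ∈ P → x = 0 := by
    rintro x ⟨y, hy, rfl⟩ hxP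
    have h1 : y ∈ P.comap E.subtype ⊓ C0 := ⟨hxP, hy⟩
    rw [hC0.inf_eq_bot, Submodule.mem_bot] at h1
    rw [h1]
    rfl
  have hCPsup : C ⊔ P = E := by
    have hPmap : (P.comap E.subtype).map E.subtype = P := by
      rw [Submodule.map_comap_subtype]
      exact inf_eq_right.mpr hPle
    rw [← hPmap, ← Submodule.map_sup, sup_comm C0 (P.comap E.subtype), hC0.sup_eq_top,
      Submodule.map_top, Submodule.range_subtype]
  set Cb : Submodule ℂ (Cx V) := conjE C with hCbdef
  have hCble : Cb ≤ Eb := Submodule.map_mono hCle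
  have hCbP : ∀ x, x ∈ Cb → x ∈ P → x = 0 := by
    intro x hxCb hxP
    have h1 : conjCx x ∈ C := mem_conjE.mp hxCb
    have h2 : conjCx x ∈ P := hPconj x hxP
    have h3 := hCP _ h1 h2
    have h4 := congrArg conjCx h3
    rwa [conjCx_conjCx, map_zero] at h4
  have hPc : conjE P = P := by
    apply le_antisymm
    · rintro x ⟨y, hy, rfl⟩; exact hPconj y hy
    · intro x hx; exact ⟨conjCx x, hPconj x hx, conjCx_conjCx x⟩
  have hCbPsup : Cb ⊔ P = Eb := by
    calc Cb ⊔ P = conjE C ⊔ conjE P := by rw [hPc]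
    _ = conjE (C ⊔ P) := (Submodule.map_sup _ _ _).symm
    _ = Eb := by rw [hCPsup]
  obtain ⟨W, hW⟩ := Submodule.exists_isCompl (E ⊔ Eb)
  have hWdisj : ∀ x, x ∈ E ⊔ Eb → x ∈ W → x = 0 := fun x hx hw =>
    Submodule.disjoint_def.mp hW.disjoint x hx hw
  have hsupEb : E ⊔ Eb = E ⊔ Cb := by
    rw [← hCbPsup, sup_comm Cb P, ← sup_assoc, sup_eq_left.mpr hPle]
  -- three direct complements
  have hQc : IsCompl C (P ⊔ Cb ⊔ W) := by
    constructor
    · rw [Submodule.disjoint_def]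
      intro x hxC hx
      rw [Submodule.mem_sup] at hx
      obtain ⟨u, hu, w, hw, huw⟩ := hx
      rw [Submodule.mem_sup] at hu
      obtain ⟨b, hb, d, hd, hbd⟩ := hu
      have huE : u ∈ E ⊔ Eb := Submodule.mem_sup_right (by
        rw [← hbd]; exact Eb.add_mem (hPleb hb) (hCble hd))
      have hw0 : w = 0 := by
        refine hWdisj w ?_ hw
        have h1 : w = x - u := by rw [← huw]; abel
        rw [h1]
        exact Submodule.sub_mem _ (Submodule.mem_sup_left (hCle hxC)) huE
      have hx1 : x = b + d := by rw [← huw, hw0, add_zero, ← hbd]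
      have hdE : d ∈ E := by
        have h2 : d = x - b := by rw [hx1]; abel
        rw [h2]
        exact E.sub_mem (hCle hxC) (hPle hb)
      have hd0 : d = 0 := hCbP d hd ⟨hdE, hCble hd⟩
      have hxP : x ∈ P := by rw [hx1, hd0, add_zero]; exact hb
      exact hCP x hxC hxP
    · rw [codisjoint_iff, ← sup_assoc, ← sup_assoc, hCPsup, ← hsupEb]
      exact hW.sup_eq_top
  have hQp : IsCompl P (C ⊔ Cb ⊔ W) := by
    constructor
    · rw [Submodule.disjoint_def]
      intro x hxP hx
      rw [Submodule.mem_sup] at hx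
      obtain ⟨u, hu, w, hw, huw⟩ := hx
      rw [Submodule.mem_sup] at hu
      obtain ⟨a, ha, d, hd, hbd⟩ := hu
      have huE : u ∈ E ⊔ Eb := by
        rw [← hbd]
        exact Submodule.add_mem _ (Submodule.mem_sup_left (hCle ha))
          (Submodule.mem_sup_right (hCble hd))
      have hw0 : w = 0 := by
        refine hWdisj w ?_ hw
        have h1 : w = x - u := by rw [← huw]; abel
        rw [h1]
        exact Submodule.sub_mem _ (Submodule.mem_sup_left (hPle hxP)) huE
      have hx1 : x = a + d := by rw [← huw, hw0, add_zero, ← hbd]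
      have hdE : d ∈ E := by
        have h2 : d = x - a := by rw [hx1]; abel
        rw [h2]
        exact E.sub_mem (hPle hxP) (hCle ha)
      have hd0 : d = 0 := hCbP d hd ⟨hdE, hCble hd⟩
      have hxC : x ∈ C := by rw [hx1, hd0, add_zero] at *; exact ha
      exact hCP x hxC hxP
    · rw [codisjoint_iff, ← sup_assoc, ← sup_assoc, sup_comm P C, hCPsup, ← hsupEb]
      exact hW.sup_eq_top
  have hQcb : IsCompl Cb (C ⊔ P ⊔ W) := by
    constructor
    · rw [Submodule.disjoint_def]
      intro x hxCb hx
      rw [Submodule.mem_sup] at hx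
      obtain ⟨u, hu, w, hw, huw⟩ := hx
      rw [Submodule.mem_sup] at hu
      obtain ⟨a, ha, b, hb, hbd⟩ := hu
      have huE : u ∈ E ⊔ Eb := Submodule.mem_sup_left (by
        rw [← hbd]; exact E.add_mem (hCle ha) (hPle hb))
      have hw0 : w = 0 := by
        refine hWdisj w ?_ hw
        have h1 : w = x - u := by rw [← huw]; abel
        rw [h1]
        exact Submodule.sub_mem _ (Submodule.mem_sup_right (hCble hxCb)) huE
      have hx1 : x = a + b := by rw [← huw, hw0, add_zero, ← hbd]
      have haEb : a ∈ Eb := by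
        have h2 : a = x - b := by rw [hx1]; abel
        rw [h2]
        exact Eb.sub_mem (hCble hxCb) (hPleb hb)
      have ha0 : a = 0 := hCP a ha ⟨hCle ha, haEb⟩
      have hxP : x ∈ P := by
        rw [hx1, ha0, zero_add]
        exact hb
      exact hCbP x hxCb hxP
    · rw [codisjoint_iff, ← sup_assoc, sup_comm Cb (C ⊔ P), sup_assoc, ← sup_assoc,
        hCPsup, ← hsupEb]
      exact hW.sup_eq_top
  -- the averaged projection π onto E ⊔ Ē
  set π0 : Cx V →ₗ[ℂ] Cx V :=
    (E ⊔ Eb).subtype.comp (Submodule.linearProjOfIsCompl (E ⊔ Eb) W hW) with hπ0def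
  have hπ0_mem : ∀ x, π0 x ∈ E ⊔ Eb := fun x =>
    ((Submodule.linearProjOfIsCompl (E ⊔ Eb) W hW) x).2
  have hπ0_id : ∀ x, x ∈ E ⊔ Eb → π0 x = x := by
    intro x hx
    have h1 := Submodule.linearProjOfIsCompl_apply_left hW ⟨x, hx⟩
    exact congrArg Subtype.val h1
  have hconj_sup : ∀ x, x ∈ E ⊔ Eb → conjCx x ∈ E ⊔ Eb := by
    intro x hx
    rw [Submodule.mem_sup] at hx
    obtain ⟨y, hy, z, hz, rfl⟩ := hx
    rw [map_add]
    exact Submodule.add_mem _ (Submodule.mem_sup_right (hEEb y hy))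
      (Submodule.mem_sup_left (hEbE z hz))
  set π : Cx V →ₗ[ℂ] Cx V :=
    { toFun := fun x => (2⁻¹ : ℂ) • (π0 x + conjCx (π0 (conjCx x)))
      map_add' := by
        intro x y
        show (2⁻¹ : ℂ) • (π0 (x + y) + conjCx (π0 (conjCx (x + y)))) =
          (2⁻¹ : ℂ) • (π0 x + conjCx (π0 (conjCx x))) +
            (2⁻¹ : ℂ) • (π0 y + conjCx (π0 (conjCx y)))
        simp only [map_add, smul_add]
        abel
      map_smul' := by
        intro z x
        show (2⁻¹ : ℂ) • (π0 (z • x) + conjCx (π0 (conjCx (z • x)))) =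
          (RingHom.id ℂ) z • ((2⁻¹ : ℂ) • (π0 x + conjCx (π0 (conjCx x))))
        simp only [RingHom.id_apply, map_smul, conjCx_smul, Complex.conj_conj]
        rw [← smul_add, smul_comm] } with hπdef
  have hπ_apply : ∀ x, π x = (2⁻¹ : ℂ) • (π0 x + conjCx (π0 (conjCx x))) := fun x => rfl
  have hπ_mem : ∀ x, π x ∈ E ⊔ Eb := fun x =>
    Submodule.smul_mem _ _ (Submodule.add_mem _ (hπ0_mem x)
      (hconj_sup _ (hπ0_mem (conjCx x))))
  have hπ_id : ∀ x, x ∈ E ⊔ Eb → π x = x := by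
    intro x hx
    rw [hπ_apply, hπ0_id x hx, hπ0_id _ (hconj_sup x hx), conjCx_conjCx]
    have h1 : x + x = (2 : ℂ) • x := (two_smul ℂ x).symm
    rw [h1, smul_smul]
    norm_num
  have hπ_conj : ∀ x, π (conjCx x) = conjCx (π x) := by
    intro x
    rw [hπ_apply, hπ_apply, conjCx_conjCx, conjCx_smul, map_add, conjCx_conjCx]
    have h1 : (starRingEnd ℂ) (2⁻¹ : ℂ) = 2⁻¹ := by
      rw [show ((2⁻¹ : ℂ)) = ((2⁻¹ : ℝ) : ℂ) by norm_num, Complex.conj_ofReal]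
    rw [h1, add_comm]
  -- the three coordinate maps
  set pc : Cx V →ₗ[ℂ] Cx V :=
    (C.subtype.comp (Submodule.linearProjOfIsCompl C (P ⊔ Cb ⊔ W) hQc)).comp π with hpcdef
  set pp : Cx V →ₗ[ℂ] Cx V :=
    (P.subtype.comp (Submodule.linearProjOfIsCompl P (C ⊔ Cb ⊔ W) hQp)).comp π with hppdef
  set pcb : Cx V →ₗ[ℂ] Cx V :=
    (Cb.subtype.comp (Submodule.linearProjOfIsCompl Cb (C ⊔ P ⊔ W) hQcb)).comp π
    with hpcbdef
  have hpcC : ∀ x, pc x ∈ C := fun x =>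
    ((Submodule.linearProjOfIsCompl C (P ⊔ Cb ⊔ W) hQc) (π x)).2
  have hppP : ∀ x, pp x ∈ P := fun x =>
    ((Submodule.linearProjOfIsCompl P (C ⊔ Cb ⊔ W) hQp) (π x)).2
  have hpcbCb : ∀ x, pcb x ∈ Cb := fun x =>
    ((Submodule.linearProjOfIsCompl Cb (C ⊔ P ⊔ W) hQcb) (π x)).2
  have hval : ∀ (x a b d : Cx V), a ∈ C → b ∈ P → d ∈ Cb → π x = a + b + d →
      pc x = a ∧ pp x = b ∧ pcb x = d := by
    intro x a b d ha hb hd h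
    refine ⟨?_, ?_, ?_⟩
    · have h1 : Submodule.linearProjOfIsCompl C (P ⊔ Cb ⊔ W) hQc a = ⟨a, ha⟩ :=
        Submodule.linearProjOfIsCompl_apply_left hQc ⟨a, ha⟩
      have h2 : Submodule.linearProjOfIsCompl C (P ⊔ Cb ⊔ W) hQc b = 0 :=
        Submodule.linearProjOfIsCompl_apply_right' hQc
          (Submodule.mem_sup_left (Submodule.mem_sup_left hb))
      have h3 : Submodule.linearProjOfIsCompl C (P ⊔ Cb ⊔ W) hQc d = 0 :=
        Submodule.linearProjOfIsCompl_apply_right' hQc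
          (Submodule.mem_sup_left (Submodule.mem_sup_right hd))
      have hproj : Submodule.linearProjOfIsCompl C (P ⊔ Cb ⊔ W) hQc (π x) = ⟨a, ha⟩ := by
        rw [h, map_add, map_add, h1, h2, h3, add_zero, add_zero]
      show C.subtype ((Submodule.linearProjOfIsCompl C (P ⊔ Cb ⊔ W) hQc) (π x)) = a
      rw [hproj]
      rfl
    · have h1 : Submodule.linearProjOfIsCompl P (C ⊔ Cb ⊔ W) hQp b = ⟨b, hb⟩ :=
        Submodule.linearProjOfIsCompl_apply_left hQp ⟨b, hb⟩
      have h2 : Submodule.linearProjOfIsCompl P (C ⊔ Cb ⊔ W) hQp a = 0 :=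
        Submodule.linearProjOfIsCompl_apply_right' hQp
          (Submodule.mem_sup_left (Submodule.mem_sup_left ha))
      have h3 : Submodule.linearProjOfIsCompl P (C ⊔ Cb ⊔ W) hQp d = 0 :=
        Submodule.linearProjOfIsCompl_apply_right' hQp
          (Submodule.mem_sup_left (Submodule.mem_sup_right hd))
      have hproj : Submodule.linearProjOfIsCompl P (C ⊔ Cb ⊔ W) hQp (π x) = ⟨b, hb⟩ := by
        rw [h, map_add, map_add, h1, h2, h3, zero_add, add_zero]
      show P.subtype ((Submodule.linearProjOfIsCompl P (C ⊔ Cb ⊔ W) hQp) (π x)) = b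
      rw [hproj]
      rfl
    · have h1 : Submodule.linearProjOfIsCompl Cb (C ⊔ P ⊔ W) hQcb d = ⟨d, hd⟩ :=
        Submodule.linearProjOfIsCompl_apply_left hQcb ⟨d, hd⟩
      have h2 : Submodule.linearProjOfIsCompl Cb (C ⊔ P ⊔ W) hQcb a = 0 :=
        Submodule.linearProjOfIsCompl_apply_right' hQcb
          (Submodule.mem_sup_left (Submodule.mem_sup_left ha))
      have h3 : Submodule.linearProjOfIsCompl Cb (C ⊔ P ⊔ W) hQcb b = 0 :=
        Submodule.linearProjOfIsCompl_apply_right' hQcb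
          (Submodule.mem_sup_left (Submodule.mem_sup_right hb))
      have hproj : Submodule.linearProjOfIsCompl Cb (C ⊔ P ⊔ W) hQcb (π x) = ⟨d, hd⟩ := by
        rw [h, map_add, map_add, h1, h2, h3, zero_add, zero_add]
      show Cb.subtype ((Submodule.linearProjOfIsCompl Cb (C ⊔ P ⊔ W) hQcb) (π x)) = d
      rw [hproj]
      rfl
  have hdec : ∀ x : Cx V, ∃ a b d, a ∈ C ∧ b ∈ P ∧ d ∈ Cb ∧ π x = a + b + d := by
    intro x
    have hx : π x ∈ E ⊔ Eb := hπ_mem x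
    rw [hsupEb, ← hCPsup, sup_assoc, sup_comm P Cb, ← sup_assoc] at hx
    rw [Submodule.mem_sup] at hx
    obtain ⟨u, hu, b, hb, h2⟩ := hx
    rw [Submodule.mem_sup] at hu
    obtain ⟨a, ha, d, hd, h3⟩ := hu
    exact ⟨a, b, d, ha, hb, hd, by rw [← h2, ← h3]; abel⟩
  have hmemE : ∀ x, x ∈ E → pc x + pp x = x ∧ pcb x = 0 := by
    intro x hx
    have hx2 : x ∈ C ⊔ P := by rw [hCPsup]; exact hx
    rw [Submodule.mem_sup] at hx2
    obtain ⟨a, ha, b, hb, hab⟩ := hx2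
    have hπx : π x = a + b + (0 : Cx V) := by
      rw [hπ_id x (Submodule.mem_sup_left hx), add_zero, hab]
    obtain ⟨h1, h2, h3⟩ := hval x a b 0 ha hb (Submodule.zero_mem Cb) hπx
    exact ⟨by rw [h1, h2, hab], h3⟩
  have hconjmaps : ∀ x, pc (conjCx x) = conjCx (pcb x) ∧ pp (conjCx x) = conjCx (pp x) ∧
      pcb (conjCx x) = conjCx (pc x) := by
    intro x
    obtain ⟨a, b, d, ha, hb, hd, h⟩ := hdec x
    have hπc : π (conjCx x) = conjCx d + conjCx b + conjCx a := by
      rw [hπ_conj, h, map_add, map_add]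
      abel
    have hdC : conjCx d ∈ C := mem_conjE.mp hd
    have haCb : conjCx a ∈ Cb := ⟨a, ha, rfl⟩
    have hbP : conjCx b ∈ P := hPconj b hb
    obtain ⟨h1, h2, h3⟩ := hval (conjCx x) _ _ _ hdC hbP haCb hπc
    obtain ⟨g1, g2, g3⟩ := hval x a b d ha hb hd h
    exact ⟨by rw [h1, g3], by rw [h2, g2], by rw [h3, g1]⟩
  -- assembling the bilinear form β
  have hcpE : ∀ x, (pc + pp) x ∈ E := fun x =>
    E.add_mem (hCle (hpcC x)) (hPle (hppP x))
  have hcbpEb : ∀ x, pcb x + pp x ∈ Eb := fun x =>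
    Eb.add_mem (hCble (hpcbCb x)) (hPleb (hppP x))
  have hconjmem : ∀ x, conjCx (pcb x + pp x) ∈ E := fun x => hEbE _ (hcbpEb x)
  set j : Cx V →ₗ[ℂ] ↥E := LinearMap.codRestrict E (pc + pp) hcpE with hjdef
  set j3 : Cx V →ₗ[ℂ] ↥E := LinearMap.codRestrict E pp (fun x => hPle (hppP x)) with hj3def
  set m2 : Cx V → ↥E := fun x => ⟨conjCx (pcb x + pp x), hconjmem x⟩ with hm2def
  set T1 : Cx V →ₗ[ℂ] DualC V := (LinearMap.lcomp ℂ ℂ (pc + pp)).comp (ε.comp j) with hT1def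
  set T3 : Cx V →ₗ[ℂ] DualC V := (LinearMap.lcomp ℂ ℂ pp).comp (ε.comp j3) with hT3def
  have hm2add : ∀ x y, m2 (x + y) = m2 x + m2 y := by
    intro x y
    apply Subtype.ext
    show conjCx ((pcb + pp) (x + y)) = conjCx ((pcb + pp) x) + conjCx ((pcb + pp) y)
    rw [map_add, map_add]
  have hm2smul : ∀ (z : ℂ) x, m2 (z • x) = (starRingEnd ℂ z) • m2 x := by
    intro z x
    apply Subtype.ext
    show conjCx ((pcb + pp) (z • x)) = (starRingEnd ℂ z) • conjCx ((pcb + pp) x)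
    rw [map_smul, conjCx_smul]
  set T2 : Cx V →ₗ[ℂ] DualC V :=
    { toFun := fun x => conjDual ((ε (m2 x)).comp (pc + pp))
      map_add' := by
        intro x y
        show conjDual ((ε (m2 (x + y))).comp (pc + pp)) =
          conjDual ((ε (m2 x)).comp (pc + pp)) + conjDual ((ε (m2 y)).comp (pc + pp))
        rw [hm2add, map_add, LinearMap.add_comp, map_add]
      map_smul' := by
        intro z x
        show conjDual ((ε (m2 (z • x))).comp (pc + pp)) =
          (RingHom.id ℂ) z • conjDual ((ε (m2 x)).comp (pc + pp))
        rw [RingHom.id_apply, hm2smul, map_smul, LinearMap.smul_comp, map_smulₛₗ,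
          Complex.conj_conj] } with hT2def
  set β : Cx V →ₗ[ℂ] DualC V := T1 + T2 - T3 with hβdef
  have hT1app : ∀ x y, T1 x y = ε (j x) (pc y + pp y) := fun x y => rfl
  have hT2app : ∀ x y,
      T2 x y = starRingEnd ℂ (ε (m2 x) (pc (conjCx y) + pp (conjCx y))) := fun x y => rfl
  have hT3app : ∀ x y, T3 x y = ε (j3 x) (pp y) := fun x y => rfl
  have hβapp : ∀ x y, β x y = T1 x y + T2 x y - T3 x y := fun x y => rfl
  -- β agrees with ε on E
  have hβE : ∀ (x y : Cx V) (hx : x ∈ E) (hy : y ∈ E), β x y = ε ⟨x, hx⟩ y := by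
    intro x y hx hy
    obtain ⟨hx1, hx2⟩ := hmemE x hx
    obtain ⟨hy1, hy2⟩ := hmemE y hy
    have hjx : j x = ⟨x, hx⟩ := Subtype.ext hx1
    have hT1v : T1 x y = ε ⟨x, hx⟩ y := by rw [hT1app, hjx, hy1]
    have hm2x : m2 x = ⟨conjCx (pp x), hEbE _ (hPleb (hppP x))⟩ := by
      apply Subtype.ext
      show conjCx (pcb x + pp x) = conjCx (pp x)
      rw [hx2, zero_add]
    have hargy : pc (conjCx y) + pp (conjCx y) = conjCx (pp y) := by
      rw [(hconjmaps y).1, (hconjmaps y).2.1, hy2, map_zero, zero_add]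
    have hT2v : T2 x y = ε ⟨pp x, hPle (hppP x)⟩ (pp y) := by
      rw [hT2app, hm2x, hargy]
      rw [hstar (pp x) (pp y) (hppP x) (hppP y)]
      rw [Complex.conj_conj]
    have hT3v : T3 x y = ε ⟨pp x, hPle (hppP x)⟩ (pp y) := rfl
    rw [hβapp, hT1v, hT2v, hT3v]
    ring
  -- β is alternating
  have hβalt : ∀ x, β x x = 0 := by
    intro x
    have hT1v : T1 x x = 0 := hεself (j x)
    have h2 : pc (conjCx x) + pp (conjCx x) = conjCx (pcb x + pp x) := by
      rw [(hconjmaps x).1, (hconjmaps x).2.1, map_add]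
    have hT2v : T2 x x = 0 := by
      rw [hT2app, h2]
      have h3 : ε (m2 x) (conjCx (pcb x + pp x)) = 0 := hεself (m2 x)
      rw [h3, map_zero]
    have hT3v : T3 x x = 0 := hεself (j3 x)
    rw [hβapp, hT1v, hT2v, hT3v]
    ring
  -- β is conjugation-symmetric
  have hβconj : ∀ x y, β (conjCx x) (conjCx y) = starRingEnd ℂ (β x y) := by
    intro x y
    have hjcx : j (conjCx x) = m2 x := by
      apply Subtype.ext
      show pc (conjCx x) + pp (conjCx x) = conjCx (pcb x + pp x)
      rw [(hconjmaps x).1, (hconjmaps x).2.1, map_add]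
    have hargy : pc (conjCx y) + pp (conjCx y) = conjCx (pcb y + pp y) := by
      rw [(hconjmaps y).1, (hconjmaps y).2.1, map_add]
    have hm2cx : m2 (conjCx x) = j x := by
      apply Subtype.ext
      show conjCx (pcb (conjCx x) + pp (conjCx x)) = pc x + pp x
      rw [(hconjmaps x).2.2, (hconjmaps x).2.1, ← map_add, conjCx_conjCx]
    have hT1v : T1 (conjCx x) (conjCx y) = starRingEnd ℂ (T2 x y) := by
      rw [hT1app, hT2app, hjcx, hargy, Complex.conj_conj]
    have hT2v : T2 (conjCx x) (conjCx y) = starRingEnd ℂ (T1 x y) := by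
      rw [hT2app, hT1app, hm2cx, conjCx_conjCx]
    have hT3v : T3 (conjCx x) (conjCx y) = starRingEnd ℂ (T3 x y) := by
      rw [hT3app, hT3app]
      have hppx : j3 (conjCx x) = ⟨conjCx (pp x), hEbE _ (hPleb (hppP x))⟩ :=
        Subtype.ext (hconjmaps x).2.1
      rw [hppx, (hconjmaps y).2.1]
      exact hstar (pp x) (pp y) (hppP x) (hppP y)
    rw [hβapp, hβapp, hT1v, hT2v, hT3v, map_sub, map_add]
    ring
  -- the real two-form B
  set B : V →ₗ[ℝ] V →ₗ[ℝ] ℝ := LinearMap.mk₂ ℝ (fun v w => (β (iV v) (iV w)).re)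
    (fun v v' w => by
      show (β (iV (v + v')) (iV w)).re = (β (iV v) (iV w)).re + (β (iV v') (iV w)).re
      rw [map_add, map_add, LinearMap.add_apply, Complex.add_re])
    (fun c v w => by
      show (β (iV (c • v)) (iV w)).re = c • (β (iV v) (iV w)).re
      rw [iV_smul, map_smul, LinearMap.smul_apply, smul_eq_mul, smul_eq_mul,
        Complex.re_ofReal_mul])
    (fun v w w' => by
      show (β (iV v) (iV (w + w'))).re = (β (iV v) (iV w)).re + (β (iV v) (iV w')).re
      rw [map_add, map_add, Complex.add_re])
    (fun c v w => by
      show (β (iV v) (iV (c • w))).re = c • (β (iV v) (iV w)).re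
      rw [iV_smul, map_smul, smul_eq_mul, smul_eq_mul, Complex.re_ofReal_mul]) with hBdef
  have hBapp : ∀ v w, B v w = (β (iV v) (iV w)).re := fun v w => rfl
  have hreal : ∀ v w : V, ((B v w : ℝ) : ℂ) = β (iV v) (iV w) := by
    intro v w
    have h := hβconj (iV v) (iV w)
    rw [conjCx_iV, conjCx_iV] at h
    rw [hBapp]
    exact Complex.conj_eq_iff_re.mp h.symm
  have hβB : bilinExt B = β := by
    apply LinearMap.ext
    intro x
    induction x using TensorProduct.induction_on with
    | zero => simp
    | add a b ha hb => rw [map_add, map_add, ha, hb]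
    | tmul z v =>
      have h1 : (z ⊗ₜ[ℝ] v : Cx V) = z • iV v := by
        simp [iV, TensorProduct.smul_tmul']
      rw [h1, map_smul, map_smul]
      congr 1
      apply LinearMap.ext
      intro y
      induction y using TensorProduct.induction_on with
      | zero => simp
      | add a b ha hb => rw [map_add, map_add, ha, hb]
      | tmul z' w =>
        have h2 : (z' ⊗ₜ[ℝ] w : Cx V) = z' • iV w := by
          simp [iV, TensorProduct.smul_tmul']
        rw [h2, map_smul, map_smul]
        congr 1
        rw [← hreal v w]
        show bilinExtAux B (iV v) (iV w) = ((B v w : ℝ) : ℂ)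
        simp only [iV, TensorProduct.mk_apply, bilinExtAux, TensorProduct.lift.tmul,
          LinearMap.mk₂_apply, one_smul]
        show dualExtAux (B v) ((1 : ℂ) ⊗ₜ[ℝ] w) = ((B v w : ℝ) : ℂ)
        simp [dualExtAux]
  -- conclusion
  refine ⟨B, fun v => ?_, ?_⟩
  · rw [hBapp, hβalt]
    rfl
  · have hle : Submodule.map (eB B) (E.prod E.dualAnnihilator) ≤ L := by
      rintro _ ⟨⟨x, ξ⟩, hmem, rfl⟩
      have hx : x ∈ E := hmem.1
      have hξ : ξ ∈ E.dualAnnihilator := hmem.2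
      apply mem_of_pair hL
      intro b hb
      show ((b.2 x + (ξ + bilinExt B x) b.1) / 2 : ℂ) = 0
      have h1 : ξ b.1 = 0 := (Submodule.mem_dualAnnihilator _).mp hξ b.1 (hfst b hb)
      have h2 : b.2 x = ε ⟨b.1, hfst b hb⟩ x := hLval b hb x hx
      have h3 : bilinExt B x b.1 = ε ⟨x, hx⟩ b.1 := by
        rw [hβB]
        exact hβE x b.1 hx (hfst b hb)
      have h4 := hskew ⟨b.1, hfst b hb⟩ ⟨x, hx⟩
      rw [LinearMap.add_apply, h1, h2, h3, zero_add]
      rw [div_eq_zero_iff]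
      left
      exact h4
    have hinj : Function.Injective (eB B) := by
      intro a b h
      have h1 : a.1 = b.1 := by
        have h1' := congrArg Prod.fst h
        exact h1'
      have h2 : a.2 + bilinExt B a.1 = b.2 + bilinExt B b.1 := by
        have h2' := congrArg Prod.snd h
        exact h2'
      rw [h1] at h2
      have h3 : a.2 = b.2 := add_right_cancel h2
      exact Prod.ext h1 h3
    have hfr1 : finrank ℂ (Submodule.map (eB B) (E.prod E.dualAnnihilator)) =
        finrank ℂ (E.prod E.dualAnnihilator) :=
      ((Submodule.equivMapOfInjective _ hinj _).finrank_eq).symm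
    have hfr2 : finrank ℂ (E.prod E.dualAnnihilator) =
        finrank ℂ E + finrank ℂ E.dualAnnihilator := finrank_prod_submodule _ _
    have hfr3 : finrank ℂ E + finrank ℂ E.dualAnnihilator = finrank ℂ (Cx V) :=
      ann_finrank E
    have hfr4 : finrank ℂ L = finrank ℝ V := finrank_lagrangian hL
    have hfr5 : finrank ℂ (Cx V) = finrank ℝ V := finrank_Cx
    have hfr6 : finrank ℂ (Submodule.map (eB B) (E.prod E.dualAnnihilator)) =
        finrank ℂ L := by omega
    exact (Submodule.eq_of_le_of_finrank_eq hle hfr6).symm
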